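/- Let 0 < μ ≤ 1, ζ > 0, ϑ ≥ μζ, 0 < θ ≤ 1, λ > 0, let (Ω, F, ℙ) be a probability space and H : Ω → [0,∞) a random variable with 𝔼[E_{μ,ϑ}^{ζ}(2λ H^θ)] < ∞. Then for every n ∈ ℕ₀ the pmf of the time-changed fractional counting process satisfies z(n) := 𝔼[P(n, H)] = (ζ)_n Γ(ϑ) λ^n / n! · ∑_{k=0}^∞ ( (−λ)^k (ζ+n)_k / (k! Γ(μ(n+k)+ϑ)) ) · 𝔼[H^{θ(n+k)}], the series converging absolutely. -/

import Mathlib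

open Real MeasureTheory Filter
open scoped ENNReal NNReal

/-- Rising factorial (Pochhammer symbol) `(ζ)_n = Γ(ζ+n)/Γ(ζ)`. -/
noncomputable def risingFactorial (ζ : ℝ) (n : ℕ) : ℝ :=
  Real.Gamma (ζ + n) / Real.Gamma ζ

/-- Three-parameter (Prabhakar) Mittag-Leffler function. -/
noncomputable def mittagLeffler (μ ϑ ζ z : ℝ) : ℝ :=
  ∑' m : ℕ, risingFactorial ζ m * z ^ m / (m.factorial * Real.Gamma (μ * m + ϑ))

/-- Probability function of the fractional counting process. -/
noncomputable def fcpP (μ ϑ ζ θ lam : ℝ) (n : ℕ) (t : ℝ) : ℝ :=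
  risingFactorial ζ n * Real.Gamma ϑ * (lam * t ^ θ) ^ n / n.factorial *
    ∑' k : ℕ, risingFactorial (ζ + n) k * (-(lam * t ^ θ)) ^ k /
      (k.factorial * Real.Gamma (μ * (n + k : ℕ) + ϑ))

lemma rf_pos {ζ : ℝ} (hζ : 0 < ζ) (n : ℕ) : 0 < risingFactorial ζ n :=
  div_pos (Real.Gamma_pos_of_pos (by positivity)) (Real.Gamma_pos_of_pos hζ)

lemma rf_succ {ζ : ℝ} (hζ : 0 < ζ) (m : ℕ) :
    risingFactorial ζ (m + 1) = risingFactorial ζ m * (ζ + m) := by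
  unfold risingFactorial
  have h : ζ + ((m : ℕ) + 1 : ℕ) = (ζ + m) + 1 := by push_cast; ring
  rw [h, Real.Gamma_add_one (by positivity)]
  ring

lemma rf_split {ζ : ℝ} (hζ : 0 < ζ) (n k : ℕ) :
    risingFactorial ζ (n + k) = risingFactorial ζ n * risingFactorial (ζ + n) k := by
  unfold risingFactorial
  have h : ζ + ((n + k : ℕ) : ℝ) = (ζ + n) + k := by push_cast; ring
  rw [h]
  have h1 : Real.Gamma (ζ + n) ≠ 0 := (Real.Gamma_pos_of_pos (by positivity)).ne'
  field_simp

lemma gamma_interp {μ x : ℝ} (hμ : 0 < μ) (hμ1 : μ ≤ 1) (hx : 0 < x) :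
    Real.Gamma (x + 1) * (x + 1) ^ (μ - 1) ≤ Real.Gamma (x + μ) := by
  have hc := Real.convexOn_log_Gamma
  have h2μ : (0:ℝ) < 2 - μ := by linarith
  have ha : x + μ ∈ Set.Ioi (0:ℝ) := by simp; linarith
  have hb : x + 2 ∈ Set.Ioi (0:ℝ) := by simp; linarith
  have hw1 : (0:ℝ) ≤ 1 / (2 - μ) := by positivity
  have hw2 : (0:ℝ) ≤ (1 - μ) / (2 - μ) := by
    apply div_nonneg (by linarith) (by linarith)
  have hsum : 1 / (2 - μ) + (1 - μ) / (2 - μ) = 1 := by field_simp; ring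
  have hkey := hc.2 ha hb hw1 hw2 hsum
  have hpt : (1 / (2 - μ)) • (x + μ) + ((1 - μ) / (2 - μ)) • (x + 2) = x + 1 := by
    simp only [smul_eq_mul]; field_simp; ring
  rw [hpt] at hkey
  simp only [Function.comp, smul_eq_mul] at hkey
  -- hkey : log (Gamma (x+1)) ≤ 1/(2-μ) * log (Gamma (x+μ)) + (1-μ)/(2-μ) * log (Gamma (x+2))
  have hG1 : 0 < Real.Gamma (x + 1) := Real.Gamma_pos_of_pos (by linarith)
  have hGμ : 0 < Real.Gamma (x + μ) := Real.Gamma_pos_of_pos (by linarith)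
  have hG2 : Real.Gamma (x + 2) = (x + 1) * Real.Gamma (x + 1) := by
    have : x + 2 = (x + 1) + 1 := by ring
    rw [this, Real.Gamma_add_one (by positivity)]
  have hlog2 : Real.log (Real.Gamma (x + 2)) = Real.log (x + 1) + Real.log (Real.Gamma (x + 1)) := by
    rw [hG2, Real.log_mul (by positivity) hG1.ne']
  rw [hlog2] at hkey
  have hexp : Real.log (Real.Gamma (x + 1)) + (μ - 1) * Real.log (x + 1)
      ≤ Real.log (Real.Gamma (x + μ)) := by
    have h3 : (2 - μ) * Real.log (Real.Gamma (x + 1)) ≤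
        Real.log (Real.Gamma (x + μ)) + (1 - μ) * (Real.log (x + 1) + Real.log (Real.Gamma (x + 1))) := by
      have := mul_le_mul_of_nonneg_left hkey h2μ.le
      calc (2 - μ) * Real.log (Real.Gamma (x + 1)) ≤ (2 - μ) * (1 / (2 - μ) * Real.log (Real.Gamma (x + μ)) + (1 - μ) / (2 - μ) * (Real.log (x + 1) + Real.log (Real.Gamma (x + 1)))) := this
        _ = Real.log (Real.Gamma (x + μ)) + (1 - μ) * (Real.log (x + 1) + Real.log (Real.Gamma (x + 1))) := by field_simp
    linarith
  calc Real.Gamma (x + 1) * (x + 1) ^ (μ - 1)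
      = Real.exp (Real.log (Real.Gamma (x + 1)) + (μ - 1) * Real.log (x + 1)) := by
        rw [Real.exp_add, Real.exp_log hG1, Real.rpow_def_of_pos (by positivity), mul_comm (μ-1)]
    _ ≤ Real.exp (Real.log (Real.Gamma (x + μ))) := Real.exp_le_exp.2 hexp
    _ = Real.Gamma (x + μ) := Real.exp_log hGμ

lemma ml_summable {μ ϑ ζ : ℝ} (hμ : 0 < μ) (hμ1 : μ ≤ 1) (hζ : 0 < ζ) (hϑ : 0 < ϑ) (z : ℝ) :
    Summable fun m : ℕ => risingFactorial ζ m * z ^ m / (m.factorial * Real.Gamma (μ * m + ϑ)) := by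
  set B : ℝ := 2 * (ζ + 1) * (|z| + 1) with hB
  have hBpos : 0 < B := by positivity
  set C : ℝ := max 1 ((2 * B) ^ (1 / μ)) with hC
  obtain ⟨M, hM⟩ := exists_nat_ge (C / μ)
  apply summable_of_ratio_norm_eventually_le (r := 1/2) (by norm_num)
  filter_upwards [eventually_ge_atTop M] with m hm
  set x : ℝ := μ * m + ϑ with hx
  have hxpos : 0 < x := by positivity
  have hxC : C ≤ x := by
    have h1 : C ≤ μ * M := by
      rw [div_le_iff₀ hμ] at hM; linarith [hM]
    have h2 : μ * (M : ℝ) ≤ μ * m := by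
      have : (M : ℝ) ≤ m := Nat.cast_le.2 hm
      nlinarith
    linarith
  have hx1 : 1 ≤ x := le_trans (le_max_left _ _) hxC
  have hx2B : (2 * B) ^ (1 / μ) ≤ x := le_trans (le_max_right _ _) hxC
  have hGx : 0 < Real.Gamma x := Real.Gamma_pos_of_pos hxpos
  have hGxμ : 0 < Real.Gamma (x + μ) := Real.Gamma_pos_of_pos (by positivity)
  -- key inequality
  have hkey : 2 * (ζ + m) * |z| * Real.Gamma x ≤ (m + 1) * Real.Gamma (x + μ) := by
    have hinterp := gamma_interp hμ hμ1 hxpos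
    have hG1 : Real.Gamma (x + 1) = x * Real.Gamma x := Real.Gamma_add_one hxpos.ne'
    -- claim: 2 (ζ+m) |z| ≤ (m+1) * x * (x+1)^(μ-1)
    have hclaim : 2 * (ζ + m) * |z| ≤ ((m : ℝ) + 1) * (x * (x + 1) ^ (μ - 1)) := by
      have step1 : 2 * (ζ + m) * |z| ≤ ((m : ℝ) + 1) * B := by
        have h1 : ζ + (m : ℝ) ≤ (ζ + 1) * (m + 1) := by nlinarith [abs_nonneg z, (show (0:ℝ) ≤ (m:ℝ) from Nat.cast_nonneg m)]
        have h2 : |z| ≤ |z| + 1 := by linarith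
        have : 2 * (ζ + m) * |z| ≤ 2 * ((ζ + 1) * (m + 1)) * (|z| + 1) := by
          nlinarith [abs_nonneg z, (show (0:ℝ) ≤ ζ + (m:ℝ) from by positivity)]
        calc 2 * (ζ + m) * |z| ≤ 2 * ((ζ + 1) * (m + 1)) * (|z| + 1) := this
          _ = ((m : ℝ) + 1) * B := by rw [hB]; ring
      have step2 : B ≤ x * (x + 1) ^ (μ - 1) := by
        have hx1p : (0:ℝ) < x + 1 := by linarith
        have e1 : (x + 1 : ℝ) ^ (μ - 1) = ((x + 1) ^ (1 - μ))⁻¹ := by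
          rw [← Real.rpow_neg hx1p.le]; ring_nf
        have e2 : (x + 1 : ℝ) ^ (1 - μ) ≤ (2 * x) ^ (1 - μ) :=
          Real.rpow_le_rpow hx1p.le (by linarith) (by linarith)
        have e3 : (2 * x : ℝ) ^ (1 - μ) = (2 * x) / (2 * x) ^ μ := by
          rw [Real.rpow_sub (by linarith), Real.rpow_one]
        have e4 : 2 * B ≤ (2 * x) ^ μ := by
          have h2x : (2 * B) ^ (1 / μ) ≤ 2 * x := by linarith
          have h5 := Real.rpow_le_rpow (by positivity) h2x hμ.le
          rw [← Real.rpow_mul (show (0:ℝ) ≤ 2 * B by positivity), one_div_mul_cancel hμ.ne', Real.rpow_one] at h5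
          exact h5
        have hBx : B * (x + 1) ^ (1 - μ) ≤ x := by
          calc B * (x + 1) ^ (1 - μ) ≤ B * ((2 * x) / (2 * x) ^ μ) := by
                rw [← e3]; exact mul_le_mul_of_nonneg_left e2 hBpos.le
            _ ≤ x := by
                rw [mul_div_assoc']
                rw [div_le_iff₀ (by positivity : (0:ℝ) < (2*x) ^ μ)]
                calc B * (2 * x) = (2 * B) * x := by ring
                  _ ≤ (2 * x) ^ μ * x := mul_le_mul_of_nonneg_right e4 hxpos.le
                  _ = x * (2 * x) ^ μ := by ring
        rw [e1, ← div_eq_mul_inv, le_div_iff₀ (by positivity : (0:ℝ) < (x+1) ^ (1-μ))]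
        exact hBx
      calc 2 * (ζ + m) * |z| ≤ ((m : ℝ) + 1) * B := step1
        _ ≤ ((m : ℝ) + 1) * (x * (x + 1) ^ (μ - 1)) := by
            apply mul_le_mul_of_nonneg_left step2 (by positivity)
    calc 2 * (ζ + m) * |z| * Real.Gamma x ≤ ((m : ℝ) + 1) * (x * (x + 1) ^ (μ - 1)) * Real.Gamma x := by
          apply mul_le_mul_of_nonneg_right hclaim hGx.le
      _ = ((m : ℝ) + 1) * (Real.Gamma (x + 1) * (x + 1) ^ (μ - 1)) := by rw [hG1]; ring
      _ ≤ ((m : ℝ) + 1) * Real.Gamma (x + μ) := by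
          apply mul_le_mul_of_nonneg_left hinterp (by positivity)
  -- norms
  have hGarg : μ * ((m + 1 : ℕ) : ℝ) + ϑ = x + μ := by push_cast; ring
  have hnorm : ∀ j : ℕ, ‖risingFactorial ζ j * z ^ j / (j.factorial * Real.Gamma (μ * j + ϑ))‖
      = risingFactorial ζ j * |z| ^ j / (j.factorial * Real.Gamma (μ * j + ϑ)) := by
    intro j
    have hGj : 0 < Real.Gamma (μ * j + ϑ) := Real.Gamma_pos_of_pos (by positivity)
    have hfj : (0:ℝ) < j.factorial := by exact_mod_cast j.factorial_pos
    rw [Real.norm_eq_abs, abs_div, abs_mul, abs_pow, abs_of_pos (rf_pos hζ j),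
      abs_of_pos (show (0:ℝ) < (j.factorial : ℝ) * Real.Gamma (μ * j + ϑ) by positivity)]
  rw [hnorm, hnorm]
  rw [rf_succ hζ m, hGarg]
  have hfm : (0:ℝ) < m.factorial := by exact_mod_cast m.factorial_pos
  have hfm1 : ((m+1 : ℕ).factorial : ℝ) = ((m:ℝ) + 1) * m.factorial := by
    rw [Nat.factorial_succ]; push_cast; ring
  rw [hfm1, pow_succ]
  have hrf := rf_pos hζ m
  have hGmx : 0 < Real.Gamma (μ * (m:ℝ) + ϑ) := Real.Gamma_pos_of_pos (by positivity)
  rw [show (1:ℝ)/2 * (risingFactorial ζ m * |z| ^ m / (↑m.factorial * Real.Gamma (μ * ↑m + ϑ)))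
      = (risingFactorial ζ m * |z| ^ m) / (2 * (↑m.factorial * Real.Gamma (μ * ↑m + ϑ))) from by ring]
  rw [div_le_div_iff₀ (by positivity) (by positivity)]
  calc risingFactorial ζ m * (ζ + ↑m) * (|z| ^ m * |z|) * (2 * (↑m.factorial * Real.Gamma (μ * ↑m + ϑ)))
      = (risingFactorial ζ m * |z| ^ m * ↑m.factorial) * (2 * (ζ + ↑m) * |z| * Real.Gamma x) := by rw [hx]; ring
    _ ≤ (risingFactorial ζ m * |z| ^ m * ↑m.factorial) * ((↑m + 1) * Real.Gamma (x + μ)) := by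
        apply mul_le_mul_of_nonneg_left hkey (by positivity)
    _ = risingFactorial ζ m * |z| ^ m * ((↑m + 1) * ↑m.factorial * Real.Gamma (x + μ)) := by ring

/-- The pmf of the time-changed fractional counting process:
`z(n) = 𝔼[P(n,H)] = (ζ)_n Γ(ϑ) λ^n/n! ∑_k (−λ)^k (ζ+n)_k/(k! Γ(μ(n+k)+ϑ)) 𝔼[H^{θ(n+k)}]`,
the series converging absolutely. -/
theorem tcfcp_pmf {Ω : Type*} [MeasurableSpace Ω] (P : Measure Ω) [IsProbabilityMeasure P]
    (μ ϑ ζ θ lam : ℝ) (hμ : 0 < μ) (hμ1 : μ ≤ 1) (hζ : 0 < ζ) (hϑ : μ * ζ ≤ ϑ)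
    (hθ : 0 < θ) (hθ1 : θ ≤ 1) (hlam : 0 < lam)
    (H : Ω → ℝ) (hHm : Measurable H) (hH0 : ∀ ω, 0 ≤ H ω)
    (hint : Integrable (fun ω => mittagLeffler μ ϑ ζ (2 * lam * H ω ^ θ)) P)
    (n : ℕ) :
    (Summable fun k : ℕ =>
      |(-lam) ^ k * risingFactorial (ζ + n) k / (k.factorial * Real.Gamma (μ * (n + k : ℕ) + ϑ)) *
        ∫ ω, H ω ^ (θ * ((n : ℝ) + k)) ∂P|) ∧
    ((∫ ω, fcpP μ ϑ ζ θ lam n (H ω) ∂P)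
      = risingFactorial ζ n * Real.Gamma ϑ * lam ^ n / n.factorial *
        ∑' k : ℕ, (-lam) ^ k * risingFactorial (ζ + n) k /
          (k.factorial * Real.Gamma (μ * (n + k : ℕ) + ϑ)) *
          ∫ ω, H ω ^ (θ * ((n : ℝ) + k)) ∂P) := by
  have hϑpos : 0 < ϑ := lt_of_lt_of_le (mul_pos hμ hζ) hϑ
  -- abbreviations
  set A : ℝ := risingFactorial ζ n * Real.Gamma ϑ * lam ^ n / n.factorial with hA_def
  set c : ℕ → ℝ := fun k =>
    (-lam) ^ k * risingFactorial (ζ + n) k /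
      (k.factorial * Real.Gamma (μ * ((n + k : ℕ) : ℝ) + ϑ)) with hc_def
  set K : ℝ := (n.factorial : ℝ) * Real.Gamma ζ / (Real.Gamma (ζ + n) * lam ^ n) with hK_def
  let term : ℕ → ℝ → ℝ := fun m t =>
    risingFactorial ζ m * (2 * lam * t ^ θ) ^ m / (m.factorial * Real.Gamma (μ * m + ϑ))
  have hApos : 0 < A := by
    apply div_pos (mul_pos (mul_pos (rf_pos hζ n) (Real.Gamma_pos_of_pos hϑpos)) (pow_pos hlam n))
    exact_mod_cast n.factorial_pos
  have hKpos : 0 < K := by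
    have h1 : (0:ℝ) < n.factorial := by exact_mod_cast n.factorial_pos
    have := Real.Gamma_pos_of_pos hζ
    have := Real.Gamma_pos_of_pos (show (0:ℝ) < ζ + n by positivity)
    positivity
  have hGpos : ∀ k : ℕ, 0 < Real.Gamma (μ * ((n + k : ℕ) : ℝ) + ϑ) := fun k =>
    Real.Gamma_pos_of_pos (by positivity)
  have hterm_nonneg : ∀ (m : ℕ) (ω : Ω), 0 ≤ term m (H ω) := by
    intro m ω
    have h1 := rf_pos hζ m
    have h2 : (0:ℝ) ≤ H ω ^ θ := Real.rpow_nonneg (hH0 ω) θ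
    have h3 : (0:ℝ) < Real.Gamma (μ * m + ϑ) := Real.Gamma_pos_of_pos (by positivity)
    have h4 : (0:ℝ) < m.factorial := by exact_mod_cast m.factorial_pos
    positivity
  have hsum_term : ∀ ω : Ω, Summable fun m => term m (H ω) := fun ω =>
    ml_summable hμ hμ1 hζ hϑpos _
  -- central pointwise bound
  have cb : ∀ (k : ℕ) (t : ℝ), 0 ≤ t →
      |c k| * t ^ (θ * ((n : ℝ) + k)) ≤ K * term (n + k) t := by
    intro k t ht
    have hGk := hGpos k
    have hfk : (0:ℝ) < k.factorial := by exact_mod_cast k.factorial_pos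
    have hfn : (0:ℝ) < n.factorial := by exact_mod_cast n.factorial_pos
    have hfnk : (0:ℝ) < (n + k).factorial := by exact_mod_cast (n + k).factorial_pos
    have hcabs : |c k| = lam ^ k * risingFactorial (ζ + n) k /
        (k.factorial * Real.Gamma (μ * ((n + k : ℕ) : ℝ) + ϑ)) := by
      rw [hc_def]
      rw [abs_div, abs_mul, abs_pow, abs_neg, abs_of_pos hlam,
        abs_of_pos (rf_pos (by positivity) k), abs_of_pos (by positivity)]
    have hts : t ^ (θ * ((n : ℝ) + k)) = (t ^ θ) ^ (n + k) := by
      rw [show θ * ((n : ℝ) + k) = θ * (((n + k : ℕ) : ℝ)) from by push_cast; ring,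
        Real.rpow_mul ht, Real.rpow_natCast]
    have hfac : (((n + k).factorial : ℕ) : ℝ) ≤ (n.factorial : ℝ) * k.factorial * 2 ^ (n + k) := by
      have hch : (n + k).choose k ≤ 2 ^ (n + k) := by
        calc (n + k).choose k ≤ ∑ i ∈ Finset.range (n + k + 1), (n + k).choose i :=
              Finset.single_le_sum (fun i _ => Nat.zero_le _) (Finset.mem_range.2 (by omega))
          _ = 2 ^ (n + k) := Nat.sum_range_choose (n + k)
      have heq : (n + k).choose k * k.factorial * n.factorial = (n + k).factorial := by
        have := Nat.choose_mul_factorial_mul_factorial (Nat.le_add_left k n)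
        simpa [Nat.add_sub_cancel] using this
      have : (n + k).factorial ≤ n.factorial * k.factorial * 2 ^ (n + k) := by
        calc (n + k).factorial = (n + k).choose k * k.factorial * n.factorial := heq.symm
          _ ≤ 2 ^ (n + k) * k.factorial * n.factorial := by
              exact Nat.mul_le_mul_right _ (Nat.mul_le_mul_right _ hch)
          _ = n.factorial * k.factorial * 2 ^ (n + k) := by ring
      exact_mod_cast this
    have hsplit : risingFactorial (ζ + n) k = risingFactorial ζ (n + k) / risingFactorial ζ n := by
      rw [rf_split hζ n k, mul_div_cancel_left₀ _ (rf_pos hζ n).ne']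
    have hR := rf_pos hζ (n + k)
    have hF := rf_pos hζ n
    have hcoeff : lam ^ k * risingFactorial (ζ + n) k / (k.factorial : ℝ) ≤
        K * (risingFactorial ζ (n + k) * (2 * lam) ^ (n + k)) / ((n + k).factorial : ℝ) := by
      rw [hsplit, div_le_div_iff₀ hfk hfnk, hK_def]
      have hstep := mul_le_mul_of_nonneg_left hfac
        (show (0:ℝ) ≤ lam ^ k * risingFactorial ζ (n + k) / risingFactorial ζ n by positivity)
      calc lam ^ k * (risingFactorial ζ (n + k) / risingFactorial ζ n) * ((n + k).factorial : ℝ)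
          = lam ^ k * risingFactorial ζ (n + k) / risingFactorial ζ n * ((n + k).factorial : ℝ) := by
            ring
        _ ≤ lam ^ k * risingFactorial ζ (n + k) / risingFactorial ζ n *
            ((n.factorial : ℝ) * k.factorial * 2 ^ (n + k)) := hstep
        _ = (n.factorial : ℝ) * Real.Gamma ζ / (Real.Gamma (ζ + n) * lam ^ n) *
            (risingFactorial ζ (n + k) * (2 * lam) ^ (n + k)) * (k.factorial : ℝ) := by
            rw [mul_pow, pow_add]
            unfold risingFactorial
            have h1 : Real.Gamma ζ ≠ 0 := (Real.Gamma_pos_of_pos hζ).ne'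
            have h2 : Real.Gamma (ζ + n) ≠ 0 := (Real.Gamma_pos_of_pos (by positivity)).ne'
            field_simp
            ring
    -- now multiply by (t^θ)^(n+k) / Gamma ≥ 0
    have hs : (0:ℝ) ≤ (t ^ θ) ^ (n + k) := by positivity
    have hmul := mul_le_mul_of_nonneg_right hcoeff
      (show (0:ℝ) ≤ (t ^ θ) ^ (n + k) / Real.Gamma (μ * ((n + k : ℕ) : ℝ) + ϑ) by positivity)
    calc |c k| * t ^ (θ * ((n : ℝ) + k))
        = lam ^ k * risingFactorial (ζ + n) k / (k.factorial : ℝ) *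
            ((t ^ θ) ^ (n + k) / Real.Gamma (μ * ((n + k : ℕ) : ℝ) + ϑ)) := by
          rw [hcabs, hts]; ring
      _ ≤ K * (risingFactorial ζ (n + k) * (2 * lam) ^ (n + k)) / ((n + k).factorial : ℝ) *
            ((t ^ θ) ^ (n + k) / Real.Gamma (μ * ((n + k : ℕ) : ℝ) + ϑ)) := hmul
      _ = K * term (n + k) t := by
          show _ = K * (risingFactorial ζ (n + k) * (2 * lam * t ^ θ) ^ (n + k) /
            ((n + k).factorial * Real.Gamma (μ * ((n + k : ℕ) : ℝ) + ϑ)))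
          rw [mul_pow]
          ring
  -- measurability
  have hHθ : Measurable fun ω => H ω ^ θ :=
    (Real.continuous_rpow_const hθ.le).measurable.comp hHm
  have hHe : ∀ k : ℕ, Measurable fun ω => H ω ^ (θ * ((n : ℝ) + k)) := fun k =>
    (Real.continuous_rpow_const (mul_nonneg hθ.le (by positivity))).measurable.comp hHm
  have htermmeas : ∀ m : ℕ, Measurable fun ω => term m (H ω) := fun m =>
    (((hHθ.const_mul (2 * lam)).pow_const m).const_mul (risingFactorial ζ m)).div_const _
  -- the dominating chain
  have hchain : (∑' m : ℕ, ∫⁻ ω, ENNReal.ofReal (term m (H ω)) ∂P) ≠ ⊤ := by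
    have h1 : (∑' m : ℕ, ∫⁻ ω, ENNReal.ofReal (term m (H ω)) ∂P)
        = ∫⁻ ω, ∑' m : ℕ, ENNReal.ofReal (term m (H ω)) ∂P :=
      (lintegral_tsum fun m => ((htermmeas m).ennreal_ofReal).aemeasurable).symm
    have h2 : ∀ ω, (∑' m : ℕ, ENNReal.ofReal (term m (H ω)))
        = ENNReal.ofReal (mittagLeffler μ ϑ ζ (2 * lam * H ω ^ θ)) := by
      intro ω
      rw [← ENNReal.ofReal_tsum_of_nonneg (fun m => hterm_nonneg m ω) (hsum_term ω)]
      rfl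
    rw [h1]
    have h3 : (∫⁻ ω, ∑' m : ℕ, ENNReal.ofReal (term m (H ω)) ∂P)
        ≤ ∫⁻ ω, ‖mittagLeffler μ ϑ ζ (2 * lam * H ω ^ θ)‖₊ ∂P := by
      apply lintegral_mono
      intro ω
      dsimp only
      rw [h2 ω]
      calc ENNReal.ofReal (mittagLeffler μ ϑ ζ (2 * lam * H ω ^ θ))
          ≤ ENNReal.ofReal |mittagLeffler μ ϑ ζ (2 * lam * H ω ^ θ)| :=
            ENNReal.ofReal_le_ofReal (le_abs_self _)
        _ = ‖mittagLeffler μ ϑ ζ (2 * lam * H ω ^ θ)‖₊ := (enorm_eq_ofReal_abs _).symm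
    exact (lt_of_le_of_lt h3 hint.2).ne
  -- per-k bound for the Bochner integrand
  have hbound : ∀ k : ℕ, (∫⁻ ω, ‖A * (c k * H ω ^ (θ * ((n : ℝ) + k)))‖₊ ∂P)
      ≤ ENNReal.ofReal (A * K) * ∫⁻ ω, ENNReal.ofReal (term (n + k) (H ω)) ∂P := by
    intro k
    rw [← lintegral_const_mul' _ _ ENNReal.ofReal_ne_top]
    apply lintegral_mono
    intro ω
    dsimp only
    rw [← enorm_eq_nnnorm, enorm_eq_ofReal_abs, ← ENNReal.ofReal_mul (by positivity : (0:ℝ) ≤ A * K)]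
    apply ENNReal.ofReal_le_ofReal
    have he : (0:ℝ) ≤ H ω ^ (θ * ((n : ℝ) + k)) := Real.rpow_nonneg (hH0 ω) _
    calc |A * (c k * H ω ^ (θ * ((n : ℝ) + k)))|
        = A * (|c k| * H ω ^ (θ * ((n : ℝ) + k))) := by
          rw [abs_mul, abs_mul, abs_of_pos hApos, abs_of_nonneg he]
      _ ≤ A * (K * term (n + k) (H ω)) :=
          mul_le_mul_of_nonneg_left (cb k (H ω) (hH0 ω)) hApos.le
      _ = A * K * term (n + k) (H ω) := by ring
  have hfin : (∑' k : ℕ, ∫⁻ ω, ‖A * (c k * H ω ^ (θ * ((n : ℝ) + k)))‖₊ ∂P) ≠ ⊤ := by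
    apply ne_top_of_le_ne_top _ (ENNReal.tsum_le_tsum hbound)
    rw [ENNReal.tsum_mul_left]
    exact ENNReal.mul_ne_top ENNReal.ofReal_ne_top
      (ne_top_of_le_ne_top hchain (ENNReal.tsum_comp_le_tsum_of_injective (add_right_injective n) _))
  have hmeasA : ∀ k : ℕ, AEStronglyMeasurable (fun ω => A * (c k * H ω ^ (θ * ((n : ℝ) + k)))) P :=
    fun k => (((hHe k).const_mul (c k)).const_mul A).aestronglyMeasurable
  -- pointwise identity
  have hpt : ∀ ω, fcpP μ ϑ ζ θ lam n (H ω)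
      = ∑' k : ℕ, A * (c k * H ω ^ (θ * ((n : ℝ) + k))) := by
    intro ω
    have ht := hH0 ω
    unfold fcpP
    rw [← tsum_mul_left]
    apply tsum_congr
    intro k
    have ht1 : H ω ^ (θ * ((n : ℝ) + k)) = (H ω ^ θ) ^ n * (H ω ^ θ) ^ k := by
      rw [show θ * ((n : ℝ) + k) = θ * (((n + k : ℕ) : ℝ)) from by push_cast; ring,
        Real.rpow_mul ht, Real.rpow_natCast, pow_add]
    rw [hc_def, hA_def]
    rw [show -(lam * H ω ^ θ) = (-lam) * H ω ^ θ from by ring, mul_pow, mul_pow, ht1]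
    ring
  -- summability of the coefficient series
  have habs2 : ∀ k : ℕ, ENNReal.ofReal |c k * ∫ ω, H ω ^ (θ * ((n : ℝ) + k)) ∂P|
      ≤ ENNReal.ofReal K * ∫⁻ ω, ENNReal.ofReal (term (n + k) (H ω)) ∂P := by
    intro k
    calc ENNReal.ofReal |c k * ∫ ω, H ω ^ (θ * ((n : ℝ) + k)) ∂P|
        = (‖c k * ∫ ω, H ω ^ (θ * ((n : ℝ) + k)) ∂P‖₊ : ℝ≥0∞) := (enorm_eq_ofReal_abs _).symm
      _ = (‖c k‖₊ : ℝ≥0∞) * ‖∫ ω, H ω ^ (θ * ((n : ℝ) + k)) ∂P‖₊ := by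
          rw [nnnorm_mul, ENNReal.coe_mul]
      _ ≤ (‖c k‖₊ : ℝ≥0∞) * ∫⁻ ω, ‖H ω ^ (θ * ((n : ℝ) + k))‖₊ ∂P :=
          mul_le_mul_right (enorm_integral_le_lintegral_enorm _) _
      _ = ∫⁻ ω, (‖c k‖₊ : ℝ≥0∞) * ‖H ω ^ (θ * ((n : ℝ) + k))‖₊ ∂P :=
          (lintegral_const_mul' _ _ ENNReal.coe_ne_top).symm
      _ ≤ ∫⁻ ω, ENNReal.ofReal (K * term (n + k) (H ω)) ∂P := by
          apply lintegral_mono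
          intro ω
          dsimp only
          rw [← enorm_eq_nnnorm, ← enorm_eq_nnnorm, enorm_eq_ofReal_abs (c k), enorm_eq_ofReal_abs (H ω ^ (θ * ((n : ℝ) + k))),
            ← ENNReal.ofReal_mul (abs_nonneg _)]
          apply ENNReal.ofReal_le_ofReal
          rw [abs_of_nonneg (Real.rpow_nonneg (hH0 ω) _)]
          exact cb k (H ω) (hH0 ω)
      _ = ENNReal.ofReal K * ∫⁻ ω, ENNReal.ofReal (term (n + k) (H ω)) ∂P := by
          rw [← lintegral_const_mul' _ _ ENNReal.ofReal_ne_top]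
          congr 1
          funext ω
          rw [ENNReal.ofReal_mul hKpos.le]
  have hsummable : Summable fun k : ℕ => |c k * ∫ ω, H ω ^ (θ * ((n : ℝ) + k)) ∂P| := by
    have hne : (∑' k : ℕ, ENNReal.ofReal |c k * ∫ ω, H ω ^ (θ * ((n : ℝ) + k)) ∂P|) ≠ ⊤ := by
      apply ne_top_of_le_ne_top _ (ENNReal.tsum_le_tsum habs2)
      rw [ENNReal.tsum_mul_left]
      exact ENNReal.mul_ne_top ENNReal.ofReal_ne_top
        (ne_top_of_le_ne_top hchain (ENNReal.tsum_comp_le_tsum_of_injective (add_right_injective n) _))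
    have hs := ENNReal.summable_toReal hne
    refine hs.congr fun k => ?_
    rw [ENNReal.toReal_ofReal (abs_nonneg _)]
  constructor
  · refine hsummable.congr fun k => ?_
    simp only [hc_def]
  · have key1 : (∫ ω, fcpP μ ϑ ζ θ lam n (H ω) ∂P)
        = ∫ ω, ∑' k : ℕ, A * (c k * H ω ^ (θ * ((n : ℝ) + k))) ∂P :=
      integral_congr_ae (Filter.Eventually.of_forall fun ω => hpt ω)
    have key3 : ∀ k : ℕ, (∫ ω, A * (c k * H ω ^ (θ * ((n : ℝ) + k))) ∂P)
        = A * (c k * ∫ ω, H ω ^ (θ * ((n : ℝ) + k)) ∂P) := by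
      intro k
      rw [MeasureTheory.integral_const_mul, MeasureTheory.integral_const_mul]
    have key : (∫ ω, fcpP μ ϑ ζ θ lam n (H ω) ∂P)
        = A * ∑' k : ℕ, c k * ∫ ω, H ω ^ (θ * ((n : ℝ) + k)) ∂P := by
      rw [key1, integral_tsum hmeasA hfin]
      rw [tsum_congr key3, tsum_mul_left]
    rw [key]
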